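/- Let n ≥ 2 and 0 < p1 < p0 < 1 with n·(p0 − p1) > 2·p0. Define f_n(s) = 2(n−1)·p0·p1·s / ((n−2)p0² + n·p1²·s) for s ∈ (0,1], and the sequence s_0 = 1, s_{t+1} = f_n(s_t). Then: (i) f_n is strictly increasing on (0,1] and the map s ↦ f_n(s)/s is strictly decreasing on (0,1]; (ii) setting s* = max{0, (2(n−1)p0·p1 − (n−2)p0²)/(n·p1²)}, one has s* ∈ [0,1), the sequence (s_t) is nonincreasing, stays in [s*, 1], and converges to s*; (iii) the sequence Δ_t = ((n−1)p0 − n·p1·s_t)/((n−1)p0 + n·p1·s_t) is nondecreasing in t. -/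
import Mathlib


namespace ContrastRecursion

/-- The contrast map `f_n`. -/
noncomputable def fmap (n : ℕ) (p0 p1 : ℝ) (s : ℝ) : ℝ :=
  2 * ((n : ℝ) - 1) * p0 * p1 * s / (((n : ℝ) - 2) * p0 ^ 2 + (n : ℝ) * p1 ^ 2 * s)

/-- The contrast sequence `s_0 = 1`, `s_{t+1} = f_n(s_t)`. -/
noncomputable def sseq (n : ℕ) (p0 p1 : ℝ) : ℕ → ℝ
  | 0 => 1
  | t + 1 => fmap n p0 p1 (sseq n p0 p1 t)

/-- The fixed point `s* = max{0, (2(n−1)p0p1 − (n−2)p0²)/(n·p1²)}`. -/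
noncomputable def sstar (n : ℕ) (p0 p1 : ℝ) : ℝ :=
  max 0 ((2 * ((n : ℝ) - 1) * p0 * p1 - ((n : ℝ) - 2) * p0 ^ 2) / ((n : ℝ) * p1 ^ 2))

/-- The population eigengap level `Δ_t`. -/
noncomputable def Delta (n : ℕ) (p0 p1 : ℝ) (t : ℕ) : ℝ :=
  (((n : ℝ) - 1) * p0 - (n : ℝ) * p1 * sseq n p0 p1 t)
    / (((n : ℝ) - 1) * p0 + (n : ℝ) * p1 * sseq n p0 p1 t)

set_option maxHeartbeats 1000000 in
/-- Contrast recursion: monotone decrease to a fixed point.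
For `n ≥ 2`, `0 < p1 < p0 < 1` with `n(p0 − p1) > 2p0`: (i) `f_n` is strictly increasing on
`(0,1]` and `s ↦ f_n(s)/s` is strictly decreasing there; (ii) `s* ∈ [0,1)`, the sequence `(s_t)`
is nonincreasing, stays in `[s*,1]`, and converges to `s*`; (iii) `Δ_t` is nondecreasing. -/
theorem contrast_recursion (n : ℕ) (hn : 2 ≤ n) (p0 p1 : ℝ)
    (hp1 : 0 < p1) (hp01 : p1 < p0) (hp0 : p0 < 1)
    (hgap : 2 * p0 < (n : ℝ) * (p0 - p1)) :
    StrictMonoOn (fmap n p0 p1) (Set.Ioc 0 1)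
    ∧ StrictAntiOn (fun s => fmap n p0 p1 s / s) (Set.Ioc 0 1)
    ∧ (0 ≤ sstar n p0 p1 ∧ sstar n p0 p1 < 1)
    ∧ (∀ t, sseq n p0 p1 (t + 1) ≤ sseq n p0 p1 t)
    ∧ (∀ t, sstar n p0 p1 ≤ sseq n p0 p1 t ∧ sseq n p0 p1 t ≤ 1)
    ∧ Filter.Tendsto (sseq n p0 p1) Filter.atTop (nhds (sstar n p0 p1))
    ∧ Monotone (Delta n p0 p1) := by
  have hN2 : (2:ℝ) ≤ (n:ℝ) := by exact_mod_cast hn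
  have hf : ∀ s, fmap n p0 p1 s = 2 * ((n:ℝ) - 1) * p0 * p1 * s
      / (((n:ℝ) - 2) * p0 ^ 2 + (n:ℝ) * p1 ^ 2 * s) := fun s => rfl
  have hstar_eq' : sstar n p0 p1
      = max 0 ((2 * ((n:ℝ) - 1) * p0 * p1 - ((n:ℝ) - 2) * p0 ^ 2) / ((n:ℝ) * p1 ^ 2)) := rfl
  set N : ℝ := (n:ℝ) with hNdef
  set a : ℝ := 2 * (N - 1) * p0 * p1 with hadef
  set b : ℝ := (N - 2) * p0 ^ 2 with hbdef
  set c : ℝ := N * p1 ^ 2 with hcdef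
  have hNp : N * p1 < (N - 2) * p0 := by nlinarith
  have hN2' : (2:ℝ) < N := by nlinarith
  have hp0' : 0 < p0 := hp1.trans hp01
  have hb : 0 < b := by rw [hbdef]; nlinarith
  have hc : 0 < c := by rw [hcdef]; positivity
  have ha : 0 < a := by rw [hadef]; nlinarith
  have hab : a < b + c := by rw [hadef, hbdef, hcdef]; nlinarith
  have hden : ∀ s : ℝ, 0 ≤ s → 0 < b + c * s := fun s hs => by nlinarith
  -- (i) strict monotonicity
  have hmono : StrictMonoOn (fmap n p0 p1) (Set.Ioc 0 1) := by
    intro x hx y hy hxy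
    rw [hf, hf, div_lt_div_iff₀ (hden x hx.1.le) (hden y hy.1.le)]
    nlinarith [hx.1, hy.1, mul_pos ha hb]
  -- (ii) strict antitonicity of f(s)/s
  have hanti : StrictAntiOn (fun s => fmap n p0 p1 s / s) (Set.Ioc 0 1) := by
    intro x hx y hy hxy
    simp only [hf]
    rw [div_div, div_div, div_lt_div_iff₀ (mul_pos (hden y hy.1.le) hy.1)
      (mul_pos (hden x hx.1.le) hx.1)]
    nlinarith [hx.1, hy.1, mul_pos (mul_pos ha hc) (mul_pos hx.1 hy.1)]
  have hstar_eq : sstar n p0 p1 = max 0 ((a - b) / c) := hstar_eq'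
  have hstar0 : 0 ≤ sstar n p0 p1 := le_max_left _ _
  have hstar1 : sstar n p0 p1 < 1 := by
    rw [hstar_eq]
    exact max_lt one_pos ((div_lt_one hc).2 (by linarith))
  -- key invariant
  have hstep_le : ∀ s : ℝ, 0 < s → sstar n p0 p1 ≤ s → fmap n p0 p1 s ≤ s := by
    intro s hs hss
    have h1 : (a - b) / c ≤ s := le_trans (le_max_right _ _) hss
    have h2 : a - b ≤ c * s := by rw [div_le_iff₀ hc] at h1; linarith [h1]
    rw [hf, div_le_iff₀ (hden s hs.le)]
    nlinarith
  have hstep_ge : ∀ s : ℝ, 0 < s → sstar n p0 p1 ≤ s → sstar n p0 p1 ≤ fmap n p0 p1 s := by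
    intro s hs hss
    have h1 : (a - b) / c ≤ s := le_trans (le_max_right _ _) hss
    have h2 : a - b ≤ c * s := by rw [div_le_iff₀ hc] at h1; linarith [h1]
    have hfs : 0 < fmap n p0 p1 s := by
      rw [hf]; exact div_pos (by positivity) (hden s hs.le)
    rw [hstar_eq]
    refine max_le hfs.le ?_
    rw [hf, div_le_div_iff₀ hc (hden s hs.le)]
    have key : 0 ≤ b * (c * s - (a - b)) := mul_nonneg hb.le (by linarith)
    nlinarith [key]
  have hinv : ∀ t, 0 < sseq n p0 p1 t ∧ sstar n p0 p1 ≤ sseq n p0 p1 t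
      ∧ sseq n p0 p1 t ≤ 1 := by
    intro t
    induction t with
    | zero => exact ⟨one_pos, hstar1.le, le_refl 1⟩
    | succ t ih =>
      obtain ⟨h1, h2, h3⟩ := ih
      have hfs : 0 < fmap n p0 p1 (sseq n p0 p1 t) := by
        rw [hf]; exact div_pos (by positivity) (hden _ h1.le)
      exact ⟨hfs, hstep_ge _ h1 h2, le_trans (hstep_le _ h1 h2) h3⟩
  have hdec : ∀ t, sseq n p0 p1 (t + 1) ≤ sseq n p0 p1 t := by
    intro t
    exact hstep_le _ (hinv t).1 (hinv t).2.1
  have hrange : ∀ t, sstar n p0 p1 ≤ sseq n p0 p1 t ∧ sseq n p0 p1 t ≤ 1 :=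
    fun t => ⟨(hinv t).2.1, (hinv t).2.2⟩
  -- convergence
  have hantiseq : Antitone (sseq n p0 p1) := antitone_nat_of_succ_le hdec
  have hbdd : BddBelow (Set.range (sseq n p0 p1)) :=
    ⟨sstar n p0 p1, by rintro x ⟨t, rfl⟩; exact (hrange t).1⟩
  set L : ℝ := ⨅ t, sseq n p0 p1 t with hLdef
  have hconv : Filter.Tendsto (sseq n p0 p1) Filter.atTop (nhds L) :=
    tendsto_atTop_ciInf hantiseq hbdd
  have hLge : sstar n p0 p1 ≤ L := le_ciInf fun t => (hrange t).1
  have hL0 : 0 ≤ L := le_trans hstar0 hLge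
  have hcont : ContinuousAt (fmap n p0 p1) L := by
    have hne : b + c * L ≠ 0 := (hden L hL0).ne'
    have : ContinuousAt (fun s => a * s / (b + c * s)) L :=
      ContinuousAt.div (by fun_prop) (by fun_prop) hne
    exact this.congr (by filter_upwards with s using (hf s).symm)
  have hconv1 : Filter.Tendsto (fun t => sseq n p0 p1 (t + 1)) Filter.atTop
      (nhds (fmap n p0 p1 L)) := by
    have := hcont.tendsto.comp hconv
    exact this.congr fun t => rfl
  have hconv2 : Filter.Tendsto (fun t => sseq n p0 p1 (t + 1)) Filter.atTop (nhds L) :=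
    hconv.comp (Filter.tendsto_add_atTop_nat 1)
  have hfix : fmap n p0 p1 L = L := tendsto_nhds_unique hconv1 hconv2
  have hLle : L ≤ sstar n p0 p1 := by
    rw [hf, div_eq_iff (hden L hL0).ne'] at hfix
    have : L * (a - b - c * L) = 0 := by ring_nf; nlinarith [hfix]
    rcases mul_eq_zero.1 this with h | h
    · rw [h]; exact hstar0
    · have : L = (a - b) / c := by field_simp; linarith
      rw [this, hstar_eq]; exact le_max_right _ _
  have hLeq : L = sstar n p0 p1 := le_antisymm hLle hLge
  -- Delta monotone
  have hDelta : Monotone (Delta n p0 p1) := by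
    apply monotone_nat_of_le_succ
    intro t
    have h1 := (hinv t).1
    have h2 := (hinv (t + 1)).1
    have h3 := hdec t
    have hA : 0 < (N - 1) * p0 := by nlinarith
    have hB : 0 < N * p1 := by nlinarith
    unfold Delta
    rw [div_le_div_iff₀ (by nlinarith) (by nlinarith)]
    nlinarith [mul_pos hA hB, mul_pos h1 h2]
  exact ⟨hmono, hanti, ⟨hstar0, hstar1⟩, hdec, hrange, hLeq ▸ hconv, hDelta⟩

end ContrastRecursion
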